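/- arXiv:1206.2937 — 2 statements merged into one kernel-verified Lean document; each statement's English description precedes it below -/
import Mathlib

section
/- Let L(p,x,ω) = K(p) + V(x,ω) with V(·,ω) ∈ [a,b] and K convex, superlinear, K(0)=0. If γ is a 1-approximate maximizer of the control problem with payoff g satisfying g(y) < g(0) + C₁(1 + |y|), then the terminal displacement satisfies K((γ(t)-γ(0))/t) ≤ 1 + (b-a) + C₁(1 + |γ(t)|)/t for all t ≥ 1; consequently |γ(t) - γ(0)| ≤ t·R₀ for a constant R₀ depending only on K, C₁, b-a. -/
open MeasureTheory

noncomputable section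

/-- An admissible path: a Lipschitz path starting at the origin, together with an
(a.e.) derivative function on `[0,t]`. -/
structure AdmPath (d : ℕ) (t : ℝ) where
  toFun : ℝ → EuclideanSpace ℝ (Fin d)
  deriv : ℝ → EuclideanSpace ℝ (Fin d)
  lipschitz : ∃ C, LipschitzWith C toFun
  init : toFun 0 = 0
  hasDeriv : ∀ᵐ s ∂volume, s ∈ Set.Icc 0 t → HasDerivAt toFun (deriv s) s

/-- The cost functional `𝓛(γ,ω) = ∫₀ᵗ K(γ'(s)) + V(γ(s)) ds`. -/
def pathCost {d : ℕ} (K V : EuclideanSpace ℝ (Fin d) → ℝ) (t : ℝ) (p : AdmPath d t) : ℝ :=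
  ∫ s in (0:ℝ)..t, (K (p.deriv s) + V (p.toFun s))

/-- Integrability of the cost integrand of a path. -/
def CostIntegrable {d : ℕ} (K V : EuclideanSpace ℝ (Fin d) → ℝ) (t : ℝ) (p : AdmPath d t) : Prop :=
  IntervalIntegrable (fun s => K (p.deriv s) + V (p.toFun s)) volume 0 t

/-- The payoff `g(γ(t)) − 𝓛(γ,ω)` of an admissible path. -/
def payoff {d : ℕ} (K V g : EuclideanSpace ℝ (Fin d) → ℝ) (t : ℝ) (p : AdmPath d t) : ℝ :=
  g (p.toFun t) - pathCost K V t p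

/-- `γ` is a `δ`-approximate optimizer: its payoff is within `δ` of the supremal payoff. -/
def IsApproxOpt {d : ℕ} (K V g : EuclideanSpace ℝ (Fin d) → ℝ) (t δ : ℝ) (p : AdmPath d t) : Prop :=
  ∀ q : AdmPath d t, CostIntegrable K V t q → payoff K V g t q ≤ payoff K V g t p + δ

/-- Superlinear growth: `K(z)/|z| → ∞` as `|z| → ∞`. -/
def Superlinear {d : ℕ} (K : EuclideanSpace ℝ (Fin d) → ℝ) : Prop :=
  ∀ M : ℝ, ∃ R : ℝ, ∀ z, R ≤ ‖z‖ → M * ‖z‖ ≤ K z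

/-- A random environment: an assignment of a potential value to each lattice cube. -/
abbrev Env (d : ℕ) := (Fin d → ℤ) → ℝ

/-- The potential `V(x,ω) = Σ_k ω_k 1_{Q_k}(x)`, i.e. the value of `ω` on the unit cube
`Q_k = k + [0,1)^d` containing `x`. -/
def pot {d : ℕ} (ω : Env d) (x : EuclideanSpace ℝ (Fin d)) : ℝ :=
  ω (fun i => ⌊x i⌋)

/-- `φ_j ω`: flip the value of the environment at index `j` between `a` and `b`. -/
def flipEnv {d : ℕ} (a b : ℝ) (j : Fin d → ℤ) (ω : Env d) : Env d :=
  Function.update ω j (a + b - ω j)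

/-- The occupation time `π_j(γ) = |{s ∈ [0,t] : γ(s) ∈ Q_j}|`. -/
def occTime {d : ℕ} (t : ℝ) (γ : ℝ → EuclideanSpace ℝ (Fin d)) (j : Fin d → ℤ) : ℝ :=
  (volume {s : ℝ | s ∈ Set.Icc 0 t ∧ (fun i => ⌊γ s i⌋) = j}).toReal

/-- `u` is the value function: for every environment `ω`, `u ω` is the least upper bound of
the payoffs of admissible paths with integrable cost. -/
def IsValueFun {d : ℕ} (K : EuclideanSpace ℝ (Fin d) → ℝ) (g : EuclideanSpace ℝ (Fin d) → ℝ)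
    (t : ℝ) (u : Env d → ℝ) : Prop :=
  ∀ ω : Env d, IsLUB {v : ℝ | ∃ p : AdmPath d t,
    CostIntegrable K (pot ω) t p ∧ v = payoff K (pot ω) g t p} (u ω)

end


section Aux
open MeasureTheory Filter Set intervalIntegral Topology NNReal

lemma lip_ftc {d : ℕ} {f f' : ℝ → EuclideanSpace ℝ (Fin d)} {t : ℝ} (ht : 0 < t)
    {C : ℝ≥0} (hl : LipschitzWith C f)
    (hd : ∀ᵐ s ∂volume, s ∈ Set.Icc 0 t → HasDerivAt f (f' s) s) :
    AEStronglyMeasurable f' (volume.restrict (Set.Ioc 0 t)) ∧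
    (∀ᵐ s ∂(volume.restrict (Set.Ioc 0 t)), ‖f' s‖ ≤ (C:ℝ)) ∧
    Integrable f' (volume.restrict (Set.Ioc 0 t)) ∧
    ∫ s in Set.Ioc 0 t, f' s = f t - f 0 := by
  set μ := volume.restrict (Set.Ioc (0:ℝ) t) with hμdef
  have hione : ∀ᵐ s ∂μ, HasDerivAt f (f' s) s := by
    have h1 : ∀ᵐ s ∂μ, s ∈ Set.Icc 0 t → HasDerivAt f (f' s) s := ae_restrict_of_ae hd
    have h2 : ∀ᵐ s ∂μ, s ∈ Set.Ioc (0:ℝ) t := ae_restrict_mem measurableSet_Ioc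
    filter_upwards [h1, h2] with s hs hmem using hs (Set.Ioc_subset_Icc_self hmem)
  have hcongr : f' =ᵐ[μ] deriv f := by
    filter_upwards [hione] with s hs using hs.deriv.symm
  have hmeas : AEStronglyMeasurable f' μ :=
    ((stronglyMeasurable_deriv f).aestronglyMeasurable).congr hcongr.symm
  have hbd : ∀ᵐ s ∂μ, ‖f' s‖ ≤ (C:ℝ) := by
    filter_upwards [hione] with s hs using hs.le_of_lipschitz hl
  have hint : Integrable f' μ := Integrable.mono' (integrable_const (C:ℝ)) hmeas hbd
  refine ⟨hmeas, hbd, hint, ?_⟩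
  have hh0 : Tendsto (fun n : ℕ => ((n:ℝ)+1)⁻¹) atTop (𝓝[≠] (0:ℝ)) := by
    apply tendsto_nhdsWithin_of_tendsto_nhds_of_eventually_within
    · simpa only [one_div] using tendsto_one_div_add_atTop_nhds_zero_nat (𝕜 := ℝ)
    · filter_upwards with n
      have : (0:ℝ) < ((n:ℝ)+1)⁻¹ := by positivity
      exact ne_of_gt this
  have slope_lim : ∀ (G : ℝ → EuclideanSpace ℝ (Fin d)) (x : ℝ)
      (L : EuclideanSpace ℝ (Fin d)), HasDerivAt G L x →
      Tendsto (fun n : ℕ => ((n:ℝ)+1) • (G (x + ((n:ℝ)+1)⁻¹) - G x)) atTop (𝓝 L) := by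
    intro G x L hG
    have h1 := (hasDerivAt_iff_tendsto_slope_zero.1 hG).comp hh0
    simpa only [Function.comp_def, inv_inv] using h1
  set g : ℕ → ℝ → EuclideanSpace ℝ (Fin d) :=
    fun n s => ((n:ℝ)+1) • (f (s + ((n:ℝ)+1)⁻¹) - f s) with hgdef
  have hfc : Continuous f := hl.continuous
  have hlim : ∀ᵐ s ∂μ, Tendsto (fun n => g n s) atTop (𝓝 (f' s)) := by
    filter_upwards [hione] with s hs using slope_lim f s (f' s) hs
  have hgmeas : ∀ n, AEStronglyMeasurable (g n) μ := fun n =>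
    (((hfc.comp (continuous_id.add continuous_const)).sub hfc).const_smul
      ((n:ℝ)+1)).aestronglyMeasurable
  have hgbd : ∀ n, ∀ᵐ s ∂μ, ‖g n s‖ ≤ (C:ℝ) := by
    intro n
    refine ae_of_all _ fun s => ?_
    have hpos : (0:ℝ) < ((n:ℝ)+1)⁻¹ := by positivity
    have hnp : (0:ℝ) < (n:ℝ)+1 := by positivity
    have h1 : ‖f (s + ((n:ℝ)+1)⁻¹) - f s‖ ≤ (C:ℝ) * ((n:ℝ)+1)⁻¹ := by
      have := hl.dist_le_mul (s + ((n:ℝ)+1)⁻¹) s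
      rw [dist_eq_norm, dist_eq_norm] at this
      simpa [abs_of_pos hnp] using this
    calc ‖g n s‖ = ((n:ℝ)+1) * ‖f (s + ((n:ℝ)+1)⁻¹) - f s‖ := by
          rw [hgdef]; simp [norm_smul, abs_of_pos hnp]
      _ ≤ ((n:ℝ)+1) * ((C:ℝ) * ((n:ℝ)+1)⁻¹) := by
          exact mul_le_mul_of_nonneg_left h1 hnp.le
      _ = (C:ℝ) := by field_simp
  have hto : Tendsto (fun n => ∫ s, g n s ∂μ) atTop (𝓝 (∫ s, f' s ∂μ)) :=
    tendsto_integral_of_dominated_convergence _ hgmeas (integrable_const (C:ℝ)) hgbd hlim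
  set F : ℝ → EuclideanSpace ℝ (Fin d) := fun x => ∫ s in (0:ℝ)..x, f s with hFdef
  have hFd : ∀ x, HasDerivAt F (f x) x := fun x => (hfc.integral_hasStrictDerivAt 0 x).hasDerivAt
  have key : ∀ n : ℕ, ∫ s, g n s ∂μ =
      ((n:ℝ)+1) • (F (t + ((n:ℝ)+1)⁻¹) - F t) - ((n:ℝ)+1) • (F (0 + ((n:ℝ)+1)⁻¹) - F 0) := by
    intro n
    set h := ((n:ℝ)+1)⁻¹ with hhdef
    have i1 : IntervalIntegrable (fun s => f (s + h)) volume 0 t :=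
      ((hfc.comp (continuous_id.add continuous_const)).intervalIntegrable _ _)
    have i2 : IntervalIntegrable f volume 0 t := hfc.intervalIntegrable _ _
    have e0 : ∫ s, g n s ∂μ = ∫ s in (0:ℝ)..t, g n s :=
      (intervalIntegral.integral_of_le ht.le).symm
    have e1 : ∫ s in (0:ℝ)..t, g n s
        = ((n:ℝ)+1) • ((∫ s in (0:ℝ)..t, f (s + h)) - ∫ s in (0:ℝ)..t, f s) := by
      rw [hgdef]
      rw [intervalIntegral.integral_smul, intervalIntegral.integral_sub i1 i2]
    have e2 : (∫ s in (0:ℝ)..t, f (s + h)) = ∫ s in (0+h)..(t+h), f s :=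
      intervalIntegral.integral_comp_add_right f h
    have e3 : (∫ s in (0+h)..(t+h), f s) = F (t+h) - F (0+h) := by
      rw [hFdef]
      exact (intervalIntegral.integral_interval_sub_left
        (hfc.intervalIntegrable _ _) (hfc.intervalIntegrable _ _)).symm
    have hF0 : F 0 = 0 := intervalIntegral.integral_same
    rw [e0, e1, e2, e3, ← smul_sub]
    congr 1
    rw [hF0]
    show F (t+h) - F (0+h) - F t = F (t + h) - F t - (F (0 + h) - 0)
    abel
  have hto2 : Tendsto (fun n => ∫ s, g n s ∂μ) atTop (𝓝 (f t - f 0)) := by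
    have h1 := (slope_lim F t (f t) (hFd t)).sub (slope_lim F 0 (f 0) (hFd 0))
    exact h1.congr fun n => (key n).symm
  exact tendsto_nhds_unique hto hto2

end Aux

set_option maxHeartbeats 2000000 in
/-- any 1-approximate optimizer `γ` satisfies
`K((γ(t)−γ(0))/t) ≤ 1 + (b−a) + C₁(1+|γ(t)|)/t` for `t ≥ 1`, and consequently
`|γ(t) − γ(0)| ≤ t·R₀` for a constant `R₀` depending only on `K`, `C₁`, `b−a`. -/
theorem stmt2 {d : ℕ} (K : EuclideanSpace ℝ (Fin d) → ℝ) (C₁ a b : ℝ)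
    (hKconv : ConvexOn ℝ Set.univ K) (hKnonneg : ∀ z, 0 ≤ K z) (hK0 : K 0 = 0)
    (hKsl : Superlinear K) (hab : a < b) :
    ∃ R₀ : ℝ, 0 < R₀ ∧
      ∀ (V g : EuclideanSpace ℝ (Fin d) → ℝ) (t : ℝ) (p : AdmPath d t),
        (∀ x, V x ∈ Set.Icc a b) →
        (∀ y, g y < g 0 + C₁ * (1 + ‖y‖)) →
        1 ≤ t →
        CostIntegrable K V t p →
        IsApproxOpt K V g t 1 p →
        K (t⁻¹ • (p.toFun t - p.toFun 0)) ≤ 1 + (b - a) + C₁ * (1 + ‖p.toFun t‖) / t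
          ∧ ‖p.toFun t - p.toFun 0‖ ≤ t * R₀ := by

  classical
  obtain ⟨R, hR⟩ := hKsl (2 + (b - a) + 2 * |C₁|)
  refine ⟨max R 1 + 1, by positivity, ?_⟩
  intro V g t p hV hg ht hci hopt
  have ht0 : (0:ℝ) < t := lt_of_lt_of_le one_pos ht
  have hC₁ : 0 < C₁ := by have := hg 0; simp at this; linarith
  -- continuity of K
  have hKc : Continuous K := by
    have := hKconv.continuousOn isOpen_univ
    rwa [continuousOn_univ] at this
  obtain ⟨C, hlip⟩ := p.lipschitz
  set f := p.toFun with hfdef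
  set f' := p.deriv with hf'def
  set μ := volume.restrict (Set.Ioc (0:ℝ) t) with hμdef
  obtain ⟨hmeas, hbd, hint, hftc⟩ := lip_ftc ht0 hlip p.hasDeriv
  haveI : IsFiniteMeasure μ := by
    constructor
    rw [hμdef, Measure.restrict_apply_univ, Real.volume_Ioc]
    exact ENNReal.ofReal_lt_top
  have hμuniv : μ Set.univ = ENNReal.ofReal t := by
    rw [hμdef, Measure.restrict_apply_univ, Real.volume_Ioc, sub_zero]
  haveI : NeZero μ := by
    refine ⟨fun h => ?_⟩
    rw [h] at hμuniv
    simp only [Measure.coe_zero, Pi.zero_apply] at hμuniv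
    have := ENNReal.ofReal_pos.2 ht0
    rw [← hμuniv] at this
    exact lt_irrefl _ this
  -- integrability of K ∘ f'
  obtain ⟨M, hM⟩ := (isCompact_closedBall (0 : EuclideanSpace ℝ (Fin d)) (C:ℝ)).exists_bound_of_continuousOn hKc.continuousOn
  have hKmeas : AEStronglyMeasurable (fun s => K (f' s)) μ :=
    hKc.comp_aestronglyMeasurable hmeas
  have hKbd : ∀ᵐ s ∂μ, ‖K (f' s)‖ ≤ M := by
    filter_upwards [hbd] with s hs
    exact hM _ (mem_closedBall_zero_iff.2 hs)
  have hKint : Integrable (fun s => K (f' s)) μ :=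
    Integrable.mono' (integrable_const M) hKmeas hKbd
  -- Jensen
  have htoReal : (μ Set.univ).toReal = t := by
    rw [hμuniv, ENNReal.toReal_ofReal ht0.le]
  have havg : (⨍ s, f' s ∂μ) = t⁻¹ • (f t - f 0) := by
    rw [average_eq, measureReal_def, htoReal, hftc]
  have hjen : K (t⁻¹ • (f t - f 0)) ≤ t⁻¹ * ∫ s, K (f' s) ∂μ := by
    have h1 := hKconv.map_average_le hKc.continuousOn isClosed_univ
      (Filter.Eventually.of_forall fun _ => Set.mem_univ _) hint hKint
    rw [havg] at h1
    rwa [average_eq, measureReal_def, htoReal, smul_eq_mul] at h1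
  have hz0 : f 0 = 0 := p.init
  -- lower bound on the cost
  have hcost1 : Integrable (fun s => K (f' s) + V (f s)) μ := hci.1
  have hlow : (∫ s, K (f' s) ∂μ) + t * a ≤ ∫ s, (K (f' s) + V (f s)) ∂μ := by
    have h1 : (∫ s, (K (f' s) + a) ∂μ) ≤ ∫ s, (K (f' s) + V (f s)) ∂μ := by
      refine integral_mono (hKint.add (integrable_const a)) hcost1 fun s => ?_
      have := (hV (f s)).1
      simp only
      linarith
    rwa [integral_add hKint (integrable_const a), integral_const, measureReal_def, htoReal,
      smul_eq_mul] at h1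
  have hcost_eq : pathCost K V t p = ∫ s, (K (f' s) + V (f s)) ∂μ := by
    rw [pathCost, intervalIntegral.integral_of_le ht0.le]
  -- comparison with the constant path
  have hq : ∃ q : AdmPath d t, q.toFun = (fun _ => 0) ∧ q.deriv = (fun _ => 0) := by
    refine ⟨⟨fun _ => 0, fun _ => 0, ⟨0, LipschitzWith.const _⟩, rfl, ?_⟩, rfl, rfl⟩
    exact Filter.Eventually.of_forall fun s _ => hasDerivAt_const s 0
  obtain ⟨q, hq1, hq2⟩ := hq
  have hqint : CostIntegrable K V t q := by
    rw [CostIntegrable, hq1, hq2]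
    exact intervalIntegrable_const
  have hqpay : payoff K V g t q = g 0 - t * V 0 := by
    rw [payoff, pathCost, hq1, hq2]
    simp [hK0, intervalIntegral.integral_const]
  have hcomp := hopt q hqint
  rw [hqpay] at hcomp
  -- hcomp : g 0 - t * V 0 ≤ payoff K V g t p + 1
  have hVb : V 0 ≤ b := (hV 0).2
  have hgb : g (f t) - g 0 < C₁ * (1 + ‖f t‖) := by
    have := hg (f t); linarith
  have hmain : t * K (t⁻¹ • (f t - f 0)) ≤ C₁ * (1 + ‖f t‖) + t * (b - a) + 1 := by
    have h1 : t * K (t⁻¹ • (f t - f 0)) ≤ ∫ s, K (f' s) ∂μ := by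
      have := mul_le_mul_of_nonneg_left hjen ht0.le
      rwa [← mul_assoc, mul_inv_cancel₀ ht0.ne', one_mul] at this
    have h2 : pathCost K V t p ≤ g (f t) - g 0 + t * V 0 + 1 := by
      have := hcomp
      rw [payoff] at this
      linarith
    rw [hcost_eq] at h2
    linarith [hlow, h1, h2, hgb, mul_le_mul_of_nonneg_left hVb ht0.le]
  have goal1 : K (t⁻¹ • (f t - f 0)) ≤ 1 + (b - a) + C₁ * (1 + ‖f t‖) / t := by
    rw [← mul_le_mul_iff_right₀ ht0]
    calc t * K (t⁻¹ • (f t - f 0)) ≤ C₁ * (1 + ‖f t‖) + t * (b - a) + 1 := hmain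
      _ ≤ t * (1 + (b - a) + C₁ * (1 + ‖f t‖) / t) := by
          rw [mul_add, mul_add, mul_div_cancel₀ _ ht0.ne']
          linarith
  refine ⟨goal1, ?_⟩
  -- second part
  set z := t⁻¹ • (f t - f 0) with hzdef
  have hnorm : ‖f t - f 0‖ = t * ‖z‖ := by
    rw [hzdef, norm_smul, Real.norm_eq_abs, abs_of_pos (inv_pos.2 ht0)]
    field_simp
  rw [hnorm]
  have hR₀ : (0:ℝ) < max R 1 + 1 := by positivity
  by_contra hcon
  push_neg at hcon
  have hzgt : max R 1 + 1 < ‖z‖ := by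
    by_contra h
    push_neg at h
    exact absurd (mul_le_mul_of_nonneg_left h ht0.le) (not_le.2 hcon)
  have hz1 : (1:ℝ) ≤ ‖z‖ := le_trans (by simp [le_max_right]) hzgt.le
  have hzR : R ≤ ‖z‖ := le_trans (le_trans (le_max_left R 1) (by linarith)) hzgt.le
  have hsl := hR z hzR
  -- upper bound on K z free of t
  have hft : ‖f t‖ = t * ‖z‖ := by
    rw [← hnorm, hz0, sub_zero]
  have hup : K z ≤ 1 + (b - a) + C₁ + C₁ * ‖z‖ := by
    have h1 : C₁ * (1 + ‖f t‖) / t ≤ C₁ + C₁ * ‖z‖ := by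
      rw [hft, div_le_iff₀ ht0]
      have h2 : C₁ * 1 ≤ C₁ * t := mul_le_mul_of_nonneg_left ht hC₁.le
      have h3 : C₁ * (1 + t * ‖z‖) = C₁ * 1 + C₁ * t * ‖z‖ := by ring
      have h4 : (C₁ + C₁ * ‖z‖) * t = C₁ * t + C₁ * t * ‖z‖ := by ring
      linarith
    calc K z ≤ 1 + (b - a) + C₁ * (1 + ‖f t‖) / t := goal1
      _ ≤ 1 + (b - a) + (C₁ + C₁ * ‖z‖) := by linarith
      _ = 1 + (b - a) + C₁ + C₁ * ‖z‖ := by ring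
  have habs : C₁ ≤ |C₁| := le_abs_self C₁
  have habs0 : (0:ℝ) ≤ |C₁| := abs_nonneg C₁
  have hint2 : (2 + (b - a) + |C₁|) * 1 ≤ (2 + (b - a) + |C₁|) * ‖z‖ :=
    mul_le_mul_of_nonneg_left hz1 (by linarith : (0:ℝ) ≤ 2 + (b - a) + |C₁|)
  have hint3 : C₁ * ‖z‖ ≤ |C₁| * ‖z‖ := mul_le_mul_of_nonneg_right habs (norm_nonneg z)
  nlinarith [hsl, hup, hint2, hint3]
end

section
/- Let Ω₀ = {a,b}^{m²} with product measure P₀ having marginals P₀'(a) = α, P₀'(b) = 1−α, α ∈ (0,1). Then there exists a constant C > 0 independent of m and a function h̃ : Ω₀ → {0,1,…,m−1} such that (i) P₀(h̃ = i) ≤ C/m for all i ∈ {0,…,m−1}, and (ii) |h̃(x) − h̃(y)| ≤ 1 whenever x, y ∈ Ω₀ differ in at most one coordinate. -/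
open MeasureTheory Finset Real

set_option maxHeartbeats 1600000

/-- The Bernoulli-type measure on `{a,b}` (modeled by `Bool`, `a ↦ true`) with
`μ({a}) = α`, `μ({b}) = 1 − α`. -/
noncomputable def bern (α : ℝ) : Measure Bool :=
  ENNReal.ofReal α • Measure.dirac true + ENNReal.ofReal (1 - α) • Measure.dirac false

/-- The product measure `P₀` on `Ω₀ = {a,b}^{m²}`. -/
noncomputable def P0 (α : ℝ) (n : ℕ) : Measure (Fin n → Bool) :=
  Measure.pi fun _ => bern α

instance bern_fin (α : ℝ) : IsFiniteMeasure (bern α) := by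
  constructor
  simp only [bern, Measure.coe_add, Measure.coe_smul, Pi.add_apply, Pi.smul_apply,
    smul_eq_mul]
  exact ENNReal.add_lt_top.2 ⟨by finiteness, by finiteness⟩

def cntf {n : ℕ} (x : Fin n → Bool) : ℕ := (univ.filter fun i => x i = true).card

lemma bern_single (α : ℝ) (b : Bool) :
    bern α {b} = if b then ENNReal.ofReal α else ENNReal.ofReal (1 - α) := by
  cases b <;>
    simp [bern, Measure.dirac_apply' _ (measurableSet_singleton _)]

lemma P0_single (α : ℝ) (hα : 0 ≤ α) (hα1 : α ≤ 1) (n : ℕ) (x : Fin n → Bool) :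
    P0 α n {x} = ENNReal.ofReal (α ^ cntf x * (1 - α) ^ (n - cntf x)) := by
  have hx : {x} = Set.pi Set.univ (fun i => {x i}) := by
    ext y; simp [Set.mem_pi, funext_iff]
  rw [P0, hx, Measure.pi_pi]
  have : ∀ i : Fin n, bern α {x i} = if x i then ENNReal.ofReal α else ENNReal.ofReal (1 - α) :=
    fun i => bern_single α (x i)
  rw [Finset.prod_congr rfl (fun i _ => this i)]
  rw [Finset.prod_ite, Finset.prod_const, Finset.prod_const]
  have hcard : (univ.filter fun i => ¬ x i = true).card = n - cntf x := by
    have := Finset.card_filter_add_card_filter_not (s := (univ : Finset (Fin n)))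
      (p := fun i => x i = true)
    simp only [Finset.card_univ, Fintype.card_fin] at this
    unfold cntf; omega
  rw [ENNReal.ofReal_mul (by positivity), ENNReal.ofReal_pow hα, ENNReal.ofReal_pow (by linarith)]
  simp only [cntf, hcard]

lemma P0_finset (α : ℝ) (hα : 0 ≤ α) (hα1 : α ≤ 1) (n : ℕ) (T : Finset (Fin n → Bool)) :
    P0 α n T = ENNReal.ofReal (∑ x ∈ T, α ^ cntf x * (1 - α) ^ (n - cntf x)) := by
  have : (T : Set (Fin n → Bool)) = ⋃ x ∈ T, {x} := by
    ext y; simp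
  rw [this, measure_biUnion_finset]
  · rw [ENNReal.ofReal_sum_of_nonneg]
    exact Finset.sum_congr rfl fun x _ => P0_single α hα hα1 n x
    intro x _
    have : (0:ℝ) ≤ 1 - α := by linarith
    positivity
  · intro x _ y _ hxy
    simp [Function.onFun, Set.disjoint_singleton, hxy]
  · intro x _; exact measurableSet_singleton x

lemma cntf_le {n : ℕ} (x : Fin n → Bool) : cntf x ≤ n := by
  simpa [cntf] using (Finset.card_filter_le univ fun i => x i = true).trans_eq (by simp)

lemma sum_expand {n : ℕ} (a b : ℂ) :
    ∑ x : Fin n → Bool, a ^ cntf x * b ^ (n - cntf x) = (a + b) ^ n := by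
  have hprod : (a + b) ^ n = ∏ _i : Fin n, (a + b) := by simp
  rw [hprod, Finset.prod_add]
  apply Finset.sum_nbij' (i := fun (x : Fin n → Bool) => univ.filter (fun idx => x idx = true))
    (j := fun (t : Finset (Fin n)) => (fun idx => decide (idx ∈ t)))
  · intros; simp
  · intros; simp
  · intro x _
    funext idx; simp
  · intro t _
    ext idx; simp
  · intro x _
    rw [Finset.prod_const, Finset.prod_const, Finset.card_sdiff_of_subset (Finset.subset_univ _)]
    simp [cntf]

lemma sin_ge_third {x : ℝ} (h0 : 0 < x) (h2 : x ≤ π / 2) : x / 3 ≤ Real.sin x := by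
  rcases le_or_gt x 1 with h1 | h1
  · have := Real.sin_gt_sub_cube h0
    have hx3 : x ^ 3 ≤ x := by nlinarith [mul_nonneg (mul_nonneg h0.le (by linarith : (0:ℝ) ≤ 1 - x)) (by linarith : (0:ℝ) ≤ 1 + x)]
    linarith
  · have hs : Real.sin 1 ≤ Real.sin x := by
      apply Real.sin_le_sin_of_le_of_le_pi_div_two _ h2 h1.le
      linarith [Real.pi_pos]
    have h31 : (1:ℝ) - 1 ^ 3 / 4 < Real.sin 1 := by
      linarith [Real.sin_gt_sub_cube (x := (1:ℝ)) one_pos]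
    have hpi : π ≤ 3.15 := by linarith [Real.pi_lt_d2]
    nlinarith

lemma one_sub_cos_ge {M j : ℕ} (hj : 1 ≤ j) (hjM : 2 * j ≤ M) :
    (j : ℝ) ^ 2 / (M : ℝ) ^ 2 ≤ 1 - Real.cos ((j : ℝ) * (2 * π / M)) := by
  have hMpos : 0 < M := by omega
  have hM : (0:ℝ) < M := by exact_mod_cast hMpos
  have hjpos : (0:ℝ) < j := by exact_mod_cast hj
  have hj2 : (j:ℝ) * 2 ≤ M := by exact_mod_cast (by omega : j * 2 ≤ M)
  set x : ℝ := (j : ℝ) * π / M with hxdef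
  have hxval : (j : ℝ) * (2 * π / M) = 2 * x := by rw [hxdef]; ring
  have hx0 : 0 < x := by positivity
  have hx2 : x ≤ π / 2 := by
    rw [hxdef, div_le_div_iff₀ hM (by norm_num : (0:ℝ) < 2)]
    nlinarith [Real.pi_pos]
  have hsin := sin_ge_third hx0 hx2
  have hcos : Real.cos (2 * x) = 1 - 2 * Real.sin x ^ 2 := by
    rw [Real.cos_two_mul', Real.cos_sq']; ring
  rw [hxval, hcos]
  have hpi3 : (3:ℝ) < π := Real.pi_gt_three
  have hsin2 : (x / 3) ^ 2 ≤ Real.sin x ^ 2 := by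
    apply pow_le_pow_left₀ (by positivity) hsin
  have hxsq : ((j:ℝ) / M) ^ 2 * (π ^ 2 / 9) = (x / 3) ^ 2 := by
    rw [hxdef]; field_simp; ring
  have hpisq : (1:ℝ) ≤ π ^ 2 / 9 := by nlinarith
  have hmul := mul_le_mul_of_nonneg_left hpisq (sq_nonneg ((j:ℝ)/M))
  have h1 : ((j:ℝ)/M)^2 ≤ 2 * Real.sin x ^ 2 := by
    rw [mul_one] at hmul
    nlinarith [sq_nonneg (Real.sin x)]
  calc (j:ℝ)^2 / M^2 = ((j:ℝ)/M)^2 := by rw [div_pow]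
    _ ≤ 2 * Real.sin x ^ 2 := h1
    _ = 1 - (1 - 2 * Real.sin x ^ 2) := by ring

-- |β + α e^{iθ}| ≤ exp(−αβ(1−cos θ))
lemma abs_fac_le {α β θ : ℝ} (hα : 0 ≤ α) (hβ : 0 ≤ β) (hs : α + β = 1) :
    ‖((β : ℂ) + (α : ℂ) * Complex.exp ((θ : ℂ) * Complex.I))‖
      ≤ Real.exp (-(α * β * (1 - Real.cos θ))) := by
  set z : ℂ := (β : ℂ) + (α : ℂ) * Complex.exp ((θ : ℂ) * Complex.I) with hz
  have hre : z.re = β + α * Real.cos θ := by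
    simp [hz, Complex.exp_mul_I, Complex.add_re, Complex.mul_re,
      Complex.cos_ofReal_re, Complex.sin_ofReal_re]
  have him : z.im = α * Real.sin θ := by
    simp [hz, Complex.exp_mul_I, Complex.add_im, Complex.mul_im,
      Complex.cos_ofReal_re, Complex.sin_ofReal_re]
  have hsq : ‖z‖ ^ 2 = 1 - 2 * α * β * (1 - Real.cos θ) := by
    rw [Complex.sq_norm, Complex.normSq_apply, hre, him]
    linear_combination α ^ 2 * Real.sin_sq_add_cos_sq θ + (α + β + 1) * hs
  have hb : 1 - 2 * α * β * (1 - Real.cos θ) ≤ Real.exp (-(2 * α * β * (1 - Real.cos θ))) := by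
    linarith [Real.add_one_le_exp (-(2 * α * β * (1 - Real.cos θ)))]
  have hexp2 : Real.exp (-(α * β * (1 - Real.cos θ))) ^ 2
      = Real.exp (-(2 * α * β * (1 - Real.cos θ))) := by
    rw [← Real.exp_nat_mul]
    congr 1
    push_cast
    ring
  have : ‖z‖ ^ 2 ≤ Real.exp (-(α * β * (1 - Real.cos θ))) ^ 2 := by
    rw [hsq, hexp2]; exact hb
  have h0 := norm_nonneg z
  nlinarith [Real.exp_pos (-(α * β * (1 - Real.cos θ)))]

-- orthogonality
lemma orth_sum (M t : ℕ) (hM : 0 < M) :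
    ∑ j ∈ range M, Complex.exp (2 * π * Complex.I / M) ^ (j * t)
      = if M ∣ t then (M : ℂ) else 0 := by
  have hM0 : (M:ℂ) ≠ 0 := by exact_mod_cast hM.ne'
  have hprim := Complex.isPrimitiveRoot_exp M hM.ne'
  set ω := Complex.exp (2 * π * Complex.I / M) with hw
  have hωM : ω ^ M = 1 := hprim.pow_eq_one
  have hiff : ω ^ t = 1 ↔ M ∣ t := by
    rw [hprim.pow_eq_one_iff_dvd]
  by_cases hd : M ∣ t
  · simp only [hd, if_pos]
    have : ∀ j ∈ range M, ω ^ (j * t) = 1 := by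
      intro j _
      rw [mul_comm, pow_mul, hiff.2 hd, one_pow]
    rw [Finset.sum_congr rfl this]
    simp
  · simp only [hd, if_neg, not_false_iff]
    have hne : ω ^ t ≠ 1 := fun h => hd (hiff.1 h)
    have : ∀ j ∈ range M, ω ^ (j * t) = (ω ^ t) ^ j := by
      intro j _; rw [← pow_mul, mul_comm]
    rw [Finset.sum_congr rfl this, geom_sum_eq hne]
    have : (ω ^ t) ^ M = 1 := by rw [← pow_mul, mul_comm, pow_mul, hωM, one_pow]
    rw [this]
    simp

-- geometric tail
lemma geom_tail {ρ : ℝ} (h0 : 0 ≤ ρ) (h1 : ρ < 1) (M : ℕ) :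
    ∑ j ∈ Finset.Ico 1 M, ρ ^ j ≤ ρ / (1 - ρ) := by
  rcases le_or_gt M 1 with h | h
  · interval_cases M <;> simp <;> exact div_nonneg h0 (by linarith)
  have : ∑ j ∈ Finset.Ico 1 M, ρ ^ j = ρ * ∑ j ∈ range (M - 1), ρ ^ j := by
    rw [Finset.mul_sum, Finset.sum_Ico_eq_sum_range]
    apply Finset.sum_congr rfl
    intro j _; ring
  rw [this]
  have hg : ∑ j ∈ range (M - 1), ρ ^ j ≤ 1 / (1 - ρ) := by
    rw [geom_sum_eq h1.ne]
    have heq : (ρ ^ (M-1) - 1) / (ρ - 1) = (1 - ρ ^ (M-1)) / (1 - ρ) := by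
      rw [← neg_div_neg_eq]; ring_nf
    rw [heq, div_le_div_iff₀ (by linarith) (by linarith)]
    nlinarith [pow_nonneg h0 (M-1)]
  calc ρ * ∑ j ∈ range (M - 1), ρ ^ j ≤ ρ * (1 / (1 - ρ)) :=
        mul_le_mul_of_nonneg_left hg h0
    _ = ρ / (1 - ρ) := by ring

lemma mod_helper {M c r : ℕ} (hM : 0 < M) (hr : r < M) : M ∣ (c + (M - r)) ↔ c % M = r := by
  rw [Nat.dvd_iff_mod_eq_zero, Nat.add_mod]
  rcases Nat.eq_zero_or_pos r with h0 | hpos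
  · subst h0
    simp [Nat.sub_zero, Nat.mod_self]
  · have h2 : (M - r) % M = M - r := Nat.mod_eq_of_lt (by omega)
    rw [h2]
    have hcM := Nat.mod_lt c hM
    constructor
    · intro h
      rcases Nat.lt_or_ge (c % M + (M - r)) M with hlt | hge
      · rw [Nat.mod_eq_of_lt hlt] at h; omega
      · have hlt2 : c % M + (M - r) - M < M := by omega
        rw [Nat.mod_eq_sub_mod hge, Nat.mod_eq_of_lt hlt2] at h
        omega
    · intro h
      rw [h]
      have hrr : r + (M - r) = M := by omega
      rw [hrr, Nat.mod_self]

def ff (m k : ℕ) : ℕ := if k % (2*m) < m then k % (2*m) else 2*m - 1 - k % (2*m)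

lemma ff_lt {m : ℕ} (hm : 0 < m) (k : ℕ) : ff m k < m := by
  have h1 : k % (2*m) < 2*m := Nat.mod_lt _ (by omega)
  unfold ff; split <;> omega

lemma ff_step {m : ℕ} (hm : 0 < m) (k : ℕ) :
    ff m (k+1) ≤ ff m k + 1 ∧ ff m k ≤ ff m (k+1) + 1 := by
  have hM : 0 < 2*m := by omega
  have h1 : k % (2*m) < 2*m := Nat.mod_lt _ hM
  have h2 : (k+1) % (2*m) = if k % (2*m) = 2*m - 1 then 0 else k % (2*m) + 1 := by
    conv_lhs => rw [Nat.add_mod]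
    have h3 : 1 % (2*m) = 1 := Nat.mod_eq_of_lt (by omega)
    rw [h3]
    split
    · next h =>
        rw [h]
        have he : 2*m - 1 + 1 = 2*m := by omega
        rw [he, Nat.mod_self]
    · next h => exact Nat.mod_eq_of_lt (by omega)
  unfold ff
  rw [h2]
  split_ifs <;> omega

lemma Qle (α : ℝ) (hα : 0 < α) (hα1 : α < 1) (m : ℕ) (hm : 0 < m) (r : ℕ) (hr : r < 2*m) :
    ∑ x ∈ univ.filter (fun x : Fin (m^2) → Bool => cntf x % (2*m) = r),
        α ^ cntf x * (1-α) ^ (m^2 - cntf x)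
      ≤ (1 + 2 * (Real.exp (-(α*(1-α)/4)) / (1 - Real.exp (-(α*(1-α)/4))))) / (2*m) := by
  set β : ℝ := 1 - α with hβdef
  have hβ : 0 < β := by simp [hβdef]; linarith
  have hαβ : α + β = 1 := by simp [hβdef]
  set ρ : ℝ := Real.exp (-(α*β/4)) with hρdef
  have hρ0 : 0 < ρ := Real.exp_pos _
  have hρ1 : ρ < 1 := by
    rw [hρdef, Real.exp_lt_one_iff]
    nlinarith
  set n : ℕ := m^2 with hndef
  set M : ℕ := 2*m with hMdef
  have hM : 0 < M := by omega
  have hMR : (0:ℝ) < M := by exact_mod_cast hM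
  set ω : ℂ := Complex.exp (2 * π * Complex.I / M) with hωdef
  have hωM : ω ^ M = 1 := (Complex.isPrimitiveRoot_exp M hM.ne').pow_eq_one
  have hων : ‖ω‖ = 1 := by
    exact Complex.norm_eq_one_of_pow_eq_one hωM hM.ne'
  set w : (Fin n → Bool) → ℝ := fun x => α ^ cntf x * β ^ (n - cntf x) with hwdef
  have hw0 : ∀ x, 0 ≤ w x := fun x => by positivity
  set Q : ℝ := ∑ x ∈ univ.filter (fun x : Fin n → Bool => cntf x % M = r), w x with hQdef
  have hQ0 : 0 ≤ Q := Finset.sum_nonneg fun x _ => hw0 x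
  set Sf : ℕ → ℂ := fun j =>
    ∑ x : Fin n → Bool, ((α:ℂ) ^ cntf x * (β:ℂ) ^ (n - cntf x)) * ω ^ (j * cntf x) with hSfdef
  have hSA : ∀ j, Sf j = ((α:ℂ) * ω ^ j + (β:ℂ)) ^ n := by
    intro j
    rw [hSfdef, ← sum_expand ((α:ℂ) * ω ^ j) (β:ℂ)]
    apply Finset.sum_congr rfl
    intro x _
    rw [mul_pow, mul_comm j (cntf x), pow_mul]
    ring
  -- key Fourier identity
  have key : ((M:ℝ) * Q : ℝ) = ∑ j ∈ range M, Sf j * ω ^ (j * (M - r)) := by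
    have hRHS : ∀ j, Sf j * ω ^ (j * (M - r))
        = ∑ x : Fin n → Bool, ((α:ℂ) ^ cntf x * (β:ℂ) ^ (n - cntf x))
            * ω ^ (j * (cntf x + (M - r))) := by
      intro j
      rw [hSfdef, Finset.sum_mul]
      apply Finset.sum_congr rfl
      intro x _
      rw [mul_assoc, ← pow_add, ← Nat.mul_add]
    rw [Finset.sum_congr rfl (fun j _ => hRHS j), Finset.sum_comm]
    have hinner : ∀ x : Fin n → Bool,
        ∑ j ∈ range M, ((α:ℂ) ^ cntf x * (β:ℂ) ^ (n - cntf x)) * ω ^ (j * (cntf x + (M - r)))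
        = (if cntf x % M = r then ((w x : ℝ) : ℂ) * M else 0) := by
      intro x
      rw [← Finset.mul_sum, orth_sum M (cntf x + (M - r)) hM]
      simp only [mod_helper (c := cntf x) hM (show r < M by omega)]
      split
      · push_cast [hwdef]; ring
      · simp
    rw [Finset.sum_congr rfl (fun x _ => hinner x), ← Finset.sum_filter]
    rw [hQdef]
    push_cast
    rw [Finset.mul_sum]
    apply Finset.sum_congr rfl
    intro x _
    push_cast [hwdef]
    ring
  -- norm bound
  have hnorm : (M:ℝ) * Q ≤ ∑ j ∈ range M, ‖Sf j‖ := by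
    have h1 : (M:ℝ) * Q = ‖(((M:ℝ) * Q : ℝ) : ℂ)‖ := by
      rw [Complex.norm_of_nonneg (by positivity)]
    rw [h1, key]
    calc ‖∑ j ∈ range M, Sf j * ω ^ (j * (M - r))‖
        ≤ ∑ j ∈ range M, ‖Sf j * ω ^ (j * (M - r))‖ :=
          norm_sum_le _ _
      _ = ∑ j ∈ range M, ‖Sf j‖ := by
          apply Finset.sum_congr rfl
          intro j _
          rw [norm_mul, norm_pow, hων, one_pow, mul_one]
  have hS0 : ‖Sf 0‖ = 1 := by
    rw [hSA 0, pow_zero, mul_one]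
    have : (α:ℂ) + (β:ℂ) = 1 := by
      rw [← Complex.ofReal_add, hαβ, Complex.ofReal_one]
    rw [this, one_pow, norm_one]
  have hSj : ∀ j ∈ Finset.Ico 1 M, ‖Sf j‖ ≤ ρ ^ min j (M - j) := by
    intro j hj
    rw [Finset.mem_Ico] at hj
    set θ : ℝ := (j:ℝ) * (2 * π / M) with hθdef
    have hωj : ω ^ j = Complex.exp ((θ:ℂ) * Complex.I) := by
      rw [hωdef, ← Complex.exp_nat_mul, hθdef]
      congr 1
      push_cast
      field_simp
    have habs : ‖((α:ℂ) * ω ^ j + (β:ℂ))‖ ≤ Real.exp (-(α*β*(1 - Real.cos θ))) := by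
      rw [add_comm, hωj]
      exact abs_fac_le hα.le hβ.le hαβ
    have hmin1 : 1 ≤ min j (M - j) := by omega
    have hminM : 2 * min j (M - j) ≤ M := by omega
    have hcos : (((min j (M - j) : ℕ)) : ℝ) ^ 2 / (M:ℝ) ^ 2 ≤ 1 - Real.cos θ := by
      rcases le_total j (M - j) with hc | hc
      · have hmeq : min j (M - j) = j := by omega
        rw [hmeq, hθdef]
        exact one_sub_cos_ge hj.1 (by omega)
      · have hmeq : min j (M - j) = M - j := by omega
        rw [hmeq]
        have hjM : j ≤ M := by omega
        have hcc : Real.cos θ = Real.cos (((M - j : ℕ) : ℝ) * (2 * π / M)) := by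
          have h2 : ((M - j : ℕ) : ℝ) * (2 * π / M) = 2 * π - θ := by
            rw [hθdef]
            push_cast [Nat.cast_sub hjM]
            field_simp
          rw [h2, Real.cos_two_pi_sub]
        rw [hcc]
        exact one_sub_cos_ge (by omega) (by omega)
    -- combine
    have hcos' : (((min j (M - j) : ℕ)) : ℝ) / (M:ℝ) ^ 2 ≤ 1 - Real.cos θ := by
      have hmc : (1:ℝ) ≤ (((min j (M - j) : ℕ)) : ℝ) := Nat.one_le_cast.2 hmin1
      have : (((min j (M - j) : ℕ)) : ℝ) / (M:ℝ) ^ 2 ≤ (((min j (M - j) : ℕ)) : ℝ) ^ 2 / (M:ℝ) ^ 2 := by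
        apply div_le_div_of_nonneg_right ?_ (by positivity)
        · nlinarith
      linarith [hcos]
    have hM2 : (M:ℝ) ^ 2 = 4 * (n:ℕ) := by
      rw [hMdef, hndef]
      push_cast
      ring
    have hnR : (0:ℝ) < (n:ℕ) := by
      rw [hndef]; positivity
    have hexpo : ((n:ℕ):ℝ) * (-(α*β*(1 - Real.cos θ))) ≤ (((min j (M - j) : ℕ)) : ℝ) * (-(α*β/4)) := by
      have h2 := mul_le_mul_of_nonneg_left hcos' (show (0:ℝ) ≤ α*β*(n:ℕ) by positivity)
      have h3 : α*β*(n:ℕ) * ((((min j (M - j) : ℕ)) : ℝ) / (M:ℝ) ^ 2)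
          = α*β/4 * (((min j (M - j) : ℕ)) : ℝ) := by
        rw [hM2]
        field_simp
      linarith [h3 ▸ h2]
    calc ‖Sf j‖ = ‖((α:ℂ) * ω ^ j + (β:ℂ))‖ ^ (n:ℕ) := by
          rw [hSA j, norm_pow]
      _ ≤ Real.exp (-(α*β*(1 - Real.cos θ))) ^ (n:ℕ) := by
          apply pow_le_pow_left₀ (norm_nonneg _) habs
      _ = Real.exp (((n:ℕ):ℝ) * (-(α*β*(1 - Real.cos θ)))) := by
          rw [Real.exp_nat_mul]
      _ ≤ Real.exp ((((min j (M - j) : ℕ)) : ℝ) * (-(α*β/4))) := Real.exp_le_exp.2 hexpo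
      _ = ρ ^ min j (M - j) := by
          rw [hρdef, ← Real.exp_nat_mul]
          try (congr 1; ring)
  -- sum the bounds
  have hsplit : ∑ j ∈ range M, ‖Sf j‖
      = ‖Sf 0‖ + ∑ j ∈ Finset.Ico 1 M, ‖Sf j‖ := by
    rw [Finset.range_eq_Ico, Finset.sum_eq_sum_Ico_succ_bot hM]
  have htail : ∑ j ∈ Finset.Ico 1 M, ‖Sf j‖ ≤ 2 * (ρ / (1 - ρ)) := by
    have hstep : ∀ j ∈ Finset.Ico 1 M, ‖Sf j‖ ≤ ρ ^ j + ρ ^ (M - j) := by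
      intro j hj
      refine (hSj j hj).trans ?_
      rcases le_total j (M - j) with hc | hc
      · have hmeq : min j (M - j) = j := by omega
        rw [hmeq]
        nlinarith [pow_nonneg hρ0.le (M - j)]
      · have hmeq : min j (M - j) = M - j := by omega
        rw [hmeq]
        nlinarith [pow_nonneg hρ0.le j]
    calc ∑ j ∈ Finset.Ico 1 M, ‖Sf j‖
        ≤ ∑ j ∈ Finset.Ico 1 M, (ρ ^ j + ρ ^ (M - j)) := Finset.sum_le_sum hstep
      _ = ∑ j ∈ Finset.Ico 1 M, ρ ^ j + ∑ j ∈ Finset.Ico 1 M, ρ ^ (M - j) := by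
          rw [Finset.sum_add_distrib]
      _ = ∑ j ∈ Finset.Ico 1 M, ρ ^ j + ∑ j ∈ Finset.Ico 1 M, ρ ^ j := by
          congr 1
          apply Finset.sum_nbij' (i := fun j => M - j) (j := fun j => M - j)
          · intro a ha; rw [Finset.mem_Ico] at *; omega
          · intro a ha; rw [Finset.mem_Ico] at *; omega
          · intro a ha; rw [Finset.mem_Ico] at ha; omega
          · intro a ha; rw [Finset.mem_Ico] at ha; omega
          · intro a ha; rfl
      _ ≤ ρ / (1 - ρ) + ρ / (1 - ρ) := by
          have := geom_tail hρ0.le hρ1 M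
          linarith
      _ = 2 * (ρ / (1 - ρ)) := by ring
  have hfin : (M:ℝ) * Q ≤ 1 + 2 * (ρ / (1 - ρ)) := by
    rw [hsplit] at hnorm
    rw [hS0] at hnorm
    linarith
  have hMcast : (M:ℝ) = 2*(m:ℝ) := by rw [hMdef]; push_cast; ring
  rw [show (2:ℝ)*(m:ℝ) = (M:ℝ) from hMcast.symm, le_div_iff₀ hMR]
  linarith [hfin]

lemma cntf_close {n : ℕ} (x y : Fin n → Bool) (j : Fin n) (h : ∀ i, i ≠ j → x i = y i) :
    cntf x ≤ cntf y + 1 := by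
  unfold cntf
  have hsub : univ.filter (fun i => x i = true)
      ⊆ insert j (univ.filter (fun i => y i = true)) := by
    intro i hi
    simp only [Finset.mem_filter, Finset.mem_univ, true_and] at hi
    by_cases hij : i = j
    · simp [hij]
    · simp only [Finset.mem_insert, Finset.mem_filter, Finset.mem_univ, true_and]
      right
      rw [← h i hij]
      exact hi
  calc (univ.filter fun i => x i = true).card
      ≤ (insert j (univ.filter fun i => y i = true)).card := Finset.card_le_card hsub
    _ ≤ (univ.filter fun i => y i = true).card + 1 := Finset.card_insert_le _ _

theorem stmt15 (α : ℝ) (hα : 0 < α) (hα1 : α < 1) :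
    ∃ C : ℝ, 0 < C ∧ ∀ m : ℕ, 0 < m →
      ∃ htil : (Fin (m ^ 2) → Bool) → ℕ,
        (∀ x, htil x < m)
        ∧ (∀ i : ℕ, P0 α (m ^ 2) {x | htil x = i} ≤ ENNReal.ofReal (C / m))
        ∧ (∀ x y : Fin (m ^ 2) → Bool,
            (∃ j, ∀ i, i ≠ j → x i = y i) → |(htil x : ℤ) - (htil y : ℤ)| ≤ 1) := by
  have hβ : 0 < 1 - α := by linarith
  set ρ : ℝ := Real.exp (-(α*(1-α)/4)) with hρdef
  have hρ0 : 0 < ρ := Real.exp_pos _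
  have hρ1 : ρ < 1 := by
    rw [hρdef, Real.exp_lt_one_iff]
    nlinarith
  set C : ℝ := 1 + 2 * (ρ / (1 - ρ)) with hCdef
  have hC : 0 < C := by
    have : 0 ≤ ρ / (1 - ρ) := div_nonneg hρ0.le (by linarith)
    rw [hCdef]; linarith
  refine ⟨C, hC, ?_⟩
  intro m hm
  refine ⟨fun x => ff m (cntf x), fun x => ff_lt hm _, ?_, ?_⟩
  · intro i
    by_cases hi : i < m
    · have hset : {x : Fin (m^2) → Bool | ff m (cntf x) = i}
          = ↑(univ.filter fun x : Fin (m^2) → Bool => ff m (cntf x) = i) := by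
        ext x; simp
      rw [hset, P0_finset α hα.le hα1.le]
      apply ENNReal.ofReal_le_ofReal
      set F : ℕ → Finset (Fin (m^2) → Bool) :=
        fun r => univ.filter (fun x : Fin (m^2) → Bool => cntf x % (2*m) = r) with hFdef
      have hsub : (univ.filter fun x : Fin (m^2) → Bool => ff m (cntf x) = i)
          ⊆ F i ∪ F (2*m - 1 - i) := by
        intro x hx
        simp only [Finset.mem_filter, Finset.mem_univ, true_and] at hx
        have hmod : cntf x % (2*m) < 2*m := Nat.mod_lt _ (by omega)
        rw [hFdef]
        simp only [Finset.mem_union, Finset.mem_filter, Finset.mem_univ, true_and]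
        unfold ff at hx
        split at hx
        · left; omega
        · right; omega
      have hdisj : Disjoint (F i) (F (2*m - 1 - i)) := by
        rw [Finset.disjoint_left]
        intro x hx hx'
        rw [hFdef] at hx hx'
        simp only [Finset.mem_filter, Finset.mem_univ, true_and] at hx hx'
        omega
      have hw0 : ∀ x : Fin (m^2) → Bool, 0 ≤ α ^ cntf x * (1-α) ^ (m^2 - cntf x) :=
        fun x => by positivity
      calc ∑ x ∈ univ.filter (fun x : Fin (m^2) → Bool => ff m (cntf x) = i),
              α ^ cntf x * (1-α) ^ (m^2 - cntf x)
          ≤ ∑ x ∈ F i ∪ F (2*m - 1 - i), α ^ cntf x * (1-α) ^ (m^2 - cntf x) :=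
            Finset.sum_le_sum_of_subset_of_nonneg hsub (fun x _ _ => hw0 x)
        _ = (∑ x ∈ F i, α ^ cntf x * (1-α) ^ (m^2 - cntf x))
            + ∑ x ∈ F (2*m - 1 - i), α ^ cntf x * (1-α) ^ (m^2 - cntf x) :=
            Finset.sum_union hdisj
        _ ≤ C / (2*m) + C / (2*m) := by
            have h1 := Qle α hα hα1 m hm i (by omega)
            have h2 := Qle α hα hα1 m hm (2*m - 1 - i) (by omega)
            rw [hFdef, hCdef]
            exact add_le_add h1 h2
        _ = C / m := by
            have hm0 : (m:ℝ) ≠ 0 := Nat.cast_ne_zero.2 hm.ne'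
            field_simp
            ring
    · have hset : {x : Fin (m^2) → Bool | ff m (cntf x) = i} = ∅ := by
        ext x
        simp only [Set.mem_setOf_eq, Set.mem_empty_iff_false, iff_false]
        intro h
        have := ff_lt hm (cntf x)
        omega
      rw [hset]
      simp
  · rintro x y ⟨j, hj⟩
    have h1 : cntf x ≤ cntf y + 1 := cntf_close x y j hj
    have h2 : cntf y ≤ cntf x + 1 := cntf_close y x j (fun i hi => (hj i hi).symm)
    have h3 : ff m (cntf x) ≤ ff m (cntf y) + 1 ∧ ff m (cntf y) ≤ ff m (cntf x) + 1 := by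
      rcases Nat.lt_trichotomy (cntf x) (cntf y) with h | h | h
      · have he : cntf y = cntf x + 1 := by omega
        rw [he]
        exact ⟨(ff_step hm (cntf x)).2, (ff_step hm (cntf x)).1⟩
      · rw [h]
        omega
      · have he : cntf x = cntf y + 1 := by omega
        rw [he]
        exact ⟨(ff_step hm (cntf y)).1, (ff_step hm (cntf y)).2⟩
    show |(ff m (cntf x) : ℤ) - (ff m (cntf y) : ℤ)| ≤ 1
    rw [abs_le]
    omega
end
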